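/- Let a, b, c > 0 be real numbers with ϱ = b/√(ac) > 1, and let L : [0,∞) → ℝ be continuously differentiable and satisfy (DI). If λ is any real number with λ₋ < λ < λ₊ and L(0) ≤ λ, then L(t) ≤ λ for every t ≥ 0 (i.e. sup_{t≥0} L(t) ≤ λ). -/

import Mathlib

/-- If `L` is continuously differentiable on `[0,∞)` and satisfies the
differential inequality (DI) `L' t + 2*b*L t ≤ c + a*(L t)^2`, with `ϱ = b/√(ac) > 1`,
then `L 0 ≤ λ` with `λ₋ < λ < λ₊` implies `L t ≤ λ` for all `t ≥ 0`. -/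
theorem stmt0 (a b c : ℝ) (ha : 0 < a) (hb : 0 < b) (hc : 0 < c)
    (ϱ : ℝ) (hϱdef : ϱ = b / Real.sqrt (a * c)) (hϱ : 1 < ϱ)
    (L L' : ℝ → ℝ)
    (hderiv : ∀ t ∈ Set.Ici (0 : ℝ), HasDerivAt L (L' t) t)
    (hcont : ContinuousOn L' (Set.Ici 0))
    (hDI : ∀ t ∈ Set.Ici (0 : ℝ), L' t + 2 * b * L t ≤ c + a * (L t) ^ 2)
    (lam : ℝ)
    (hlow : Real.sqrt (c / a) * (ϱ - Real.sqrt (ϱ ^ 2 - 1)) < lam)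
    (hhigh : lam < Real.sqrt (c / a) * (ϱ + Real.sqrt (ϱ ^ 2 - 1)))
    (h0 : L 0 ≤ lam) :
    ∀ t ∈ Set.Ici (0 : ℝ), L t ≤ lam := by
  set s := Real.sqrt (c / a) with hs
  set r := Real.sqrt (ϱ ^ 2 - 1) with hr
  have hs2 : s ^ 2 = c / a := Real.sq_sqrt (by positivity)
  have hr2 : r ^ 2 = ϱ ^ 2 - 1 := Real.sq_sqrt (by nlinarith)
  have hsa : (0:ℝ) < Real.sqrt a := Real.sqrt_pos.2 ha
  have hsc : (0:ℝ) < Real.sqrt c := Real.sqrt_pos.2 hc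
  have haa : Real.sqrt a * Real.sqrt a = a := Real.mul_self_sqrt ha.le
  have hsϱ : s * ϱ = b / a := by
    rw [hs, hϱdef, Real.sqrt_div hc.le, Real.sqrt_mul ha.le]
    field_simp
    linear_combination (-1 : ℝ) * haa
  set p := s * (ϱ - r) with hp
  set q := s * (ϱ + r) with hq
  have hpq : p * q = c / a := by
    have h' : s ^ 2 * (ϱ ^ 2 - r ^ 2) = c / a := by
      rw [hr2]; ring_nf; rw [hs2]; ring
    rw [hp, hq]; nlinarith [h']
  have hc' : c = a * (p * q) := by rw [hpq]; field_simp
  have hb' : 2 * b = a * (p + q) := by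
    have : p + q = 2 * (s * ϱ) := by rw [hp, hq]; ring
    rw [this, hsϱ]; field_simp
  have hquad : c + a * lam ^ 2 - 2 * b * lam < 0 := by
    have key : c + a * lam ^ 2 - 2 * b * lam = a * (lam - p) * (lam - q) := by
      linear_combination hc' - lam * hb'
    rw [key]
    nlinarith [mul_pos (mul_pos ha (sub_pos.2 hlow)) (sub_pos.2 hhigh)]
  intro t ht
  have := image_le_of_deriv_right_lt_deriv_boundary
      (f := L) (f' := L') (a := 0) (b := t)
      (fun x hx => (hderiv x hx.1).continuousAt.continuousWithinAt)
      (fun x hx => (hderiv x hx.1).hasDerivWithinAt)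
      (B := fun _ => lam) (B' := fun _ => 0) h0
      (fun x => hasDerivAt_const x lam)
      (fun x hx hfx => by
        have hDIx := hDI x hx.1
        rw [hfx] at hDIx
        show L' x < 0
        linarith)
  exact this ⟨ht, le_refl t⟩
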